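/- Let c > 0, α, δ ∈ (0,1), ρ = (4/(e c)) α log(δ⁻¹) > 0, and let τ ≥ 1 satisfy τ log τ = ρ. Set κ = log(e c / 4) and, for q ≥ 0, set η = q + τ e c / 4. Then e^{η(log η - κ)} ≤ (4η/c)^q · δ^{-α}. -/

import Mathlib

open Real

theorem lemma_5_2 (c α δ τ q : ℝ) (hc : 0 < c) (hα : α ∈ Set.Ioo (0:ℝ) 1)
    (hδ : δ ∈ Set.Ioo (0:ℝ) 1) (hτ : 1 ≤ τ)
    (heq : τ * Real.log τ = 4 / (Real.exp 1 * c) * α * Real.log δ⁻¹)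
    (hq : 0 ≤ q) :
    Real.exp ((q + τ * Real.exp 1 * c / 4) *
        (Real.log (q + τ * Real.exp 1 * c / 4) - Real.log (Real.exp 1 * c / 4))) ≤
      (4 * (q + τ * Real.exp 1 * c / 4) / c) ^ q * δ ^ (-α) := by
  obtain ⟨hα0, hα1⟩ := hα
  obtain ⟨hδ0, hδ1⟩ := hδ
  have he : (0:ℝ) < Real.exp 1 := Real.exp_pos 1
  set A : ℝ := Real.exp 1 * c / 4 with hA
  have hA0 : 0 < A := by positivity
  have hτ0 : 0 < τ := lt_of_lt_of_le one_pos hτ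
  set η : ℝ := q + τ * Real.exp 1 * c / 4 with hη
  have hηA : η = q + τ * A := by rw [hη, hA]; ring
  have hη0 : 0 < η := by rw [hηA]; positivity
  have hαδ : α * Real.log δ⁻¹ = A * (τ * Real.log τ) := by
    rw [heq, hA]; field_simp
  have h4 : (0:ℝ) < 4 * η / c := by positivity
  -- log of the base
  have hlog4 : Real.log (4 * η / c) = 1 + (Real.log η - Real.log A) := by
    have h1 : (4 * η / c : ℝ) = Real.exp 1 * (η / A) := by
      rw [hA]; field_simp
    rw [h1, Real.log_mul (ne_of_gt he) (ne_of_gt (by positivity)),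
      Real.log_exp, Real.log_div (ne_of_gt hη0) (ne_of_gt hA0)]
  -- rewrite RHS as an exponential
  have hR : (4 * η / c) ^ q * δ ^ (-α)
      = Real.exp (q * (1 + (Real.log η - Real.log A)) + A * (τ * Real.log τ)) := by
    rw [Real.rpow_def_of_pos h4, Real.rpow_def_of_pos hδ0, ← Real.exp_add, hlog4]
    congr 1
    have : Real.log δ⁻¹ = -Real.log δ := Real.log_inv δ
    nlinarith [hαδ, this]
  rw [hR, Real.exp_le_exp]
  -- key inequality : log (η / (τ * A)) ≤ η/(τA) - 1
  have hτA : 0 < τ * A := by positivity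
  have key : Real.log (η / (τ * A)) ≤ η / (τ * A) - 1 :=
    Real.log_le_sub_one_of_pos (by positivity)
  have hlogd : Real.log (η / (τ * A)) = Real.log η - (Real.log τ + Real.log A) := by
    rw [Real.log_div (ne_of_gt hη0) (ne_of_gt hτA),
      Real.log_mul (ne_of_gt hτ0) (ne_of_gt hA0)]
  have hdiv : η / (τ * A) - 1 = q / (τ * A) := by
    rw [hηA]; field_simp; ring
  rw [hlogd, hdiv] at key
  -- multiply key by τ*A > 0
  have key2 : τ * A * (Real.log η - (Real.log τ + Real.log A)) ≤ q := by
    have := mul_le_mul_of_nonneg_left key (le_of_lt hτA)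
    calc τ * A * (Real.log η - (Real.log τ + Real.log A)) ≤ τ * A * (q / (τ * A)) := this
      _ = q := by field_simp
  have expand : η * (Real.log η - Real.log A)
      = q * (Real.log η - Real.log A)
        + τ * A * (Real.log η - (Real.log τ + Real.log A)) + τ * A * Real.log τ := by
    rw [hηA]; ring
  rw [expand]
  nlinarith [key2]
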